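/- Let m < −5/2, let a₁, a₂, a₃ ∈ S^m(ℝ) and a(η) = a₁(η₁)a₂(η₂)a₃(η₃), and let b : ℝ³ → ℂ be measurable with ‖b‖ < ∞. Fix 0 < α < β and 0 < δ < min(1, α). Then there exists C > 0 such that for all ξ ∈ ℝ with |ξ| > 1 and all κ₂, κ₃ ∈ [α, β]: |a₁(ξ) a₂(κ₂ξ) a₃(κ₃ξ)| · | ∫_{A_{GGG}(ξ,κ₂,κ₃)^c} b(η) dη | ≤ C |ξ|^{3m−1}, where A_{GGG}(ξ,κ₂,κ₃)^c denotes the complement in ℝ³ of A_{GGG}(ξ,κ₂,κ₃). -/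

import Mathlib

open MeasureTheory

/-- The Japanese bracket `⟨t⟩ = (1+t²)^{1/2}`. -/
noncomputable def jb (t : ℝ) : ℝ := Real.sqrt (1 + t ^ 2)

/-- The symbol class `S^m(ℝ)`. -/
def SymbolClass (m : ℝ) (a : ℝ → ℂ) : Prop :=
  ContDiff ℝ (⊤ : ℕ∞) a ∧
    ∀ k : ℕ, ∃ C : ℝ, 0 < C ∧ ∀ t : ℝ, ‖iteratedDeriv k a t‖ ≤ C * jb t ^ (m - (k : ℝ))

/-- `A_{GGG}(ξ,κ₂,κ₃) = {η : |η₁−ξ| ≥ δ|ξ|, |η₂−κ₂ξ| ≥ δ|ξ|, |η₃−κ₃ξ| ≥ δ|ξ|}`. -/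
def A_GGG (δ ξ κ₂ κ₃ : ℝ) : Set (Fin 3 → ℝ) :=
  {η | δ * |ξ| ≤ |η 0 - ξ| ∧ δ * |ξ| ≤ |η 1 - κ₂ * ξ| ∧ δ * |ξ| ≤ |η 2 - κ₃ * ξ|}

/-- `‖b‖² = ∫ ⟨η₁⟩^{−2m−1}⟨η₂⟩^{−2m−1}⟨η₃⟩^{−2m−1}|b(η)|² dη` as an `ℝ≥0∞`-valued integral. -/
noncomputable def bNormSq (m : ℝ) (b : (Fin 3 → ℝ) → ℂ) : ENNReal :=
  ∫⁻ η : Fin 3 → ℝ, ENNReal.ofReal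
    (jb (η 0) ^ (-2 * m - 1) * jb (η 1) ^ (-2 * m - 1) * jb (η 2) ^ (-2 * m - 1) * ‖b η‖ ^ 2)

lemma jb_pos (t : ℝ) : 0 < jb t := Real.sqrt_pos.2 (by positivity)

lemma abs_le_jb (t : ℝ) : |t| ≤ jb t := by
  rw [← Real.sqrt_sq_eq_abs]
  exact Real.sqrt_le_sqrt (by nlinarith)

lemma continuous_jb : Continuous jb :=
  Real.continuous_sqrt.comp (by continuity)

lemma continuous_jb_rpow (p : ℝ) : Continuous (fun t : ℝ => jb t ^ p) :=
  continuous_jb.rpow_const (fun t => Or.inl (jb_pos t).ne')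

lemma jb_rpow_le_of_abs_ge {p R t : ℝ} (hp : p ≤ 0) (hR : 0 < R) (h : R ≤ |t|) :
    jb t ^ p ≤ R ^ p :=
  Real.rpow_le_rpow_of_nonpos hR (h.trans (abs_le_jb t)) hp

lemma integrable_jb_rpow {p : ℝ} (hp : p ≤ -2) : Integrable (fun t : ℝ => jb t ^ p) := by
  refine integrable_inv_one_add_sq.mono' (continuous_jb_rpow p).aestronglyMeasurable
    (Filter.Eventually.of_forall fun t => ?_)
  have h1 : (1 : ℝ) ≤ 1 + t ^ 2 := by nlinarith
  have : jb t ^ p = (1 + t ^ 2) ^ (2⁻¹ * p) := by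
    rw [jb, Real.sqrt_eq_rpow, ← Real.rpow_mul (by positivity : (0:ℝ) ≤ 1 + t ^ 2)]
    norm_num
  rw [Real.norm_eq_abs, abs_of_nonneg (Real.rpow_nonneg (jb_pos t).le p), this]
  calc (1 + t ^ 2) ^ (2⁻¹ * p) ≤ (1 + t ^ 2) ^ (-1 : ℝ) :=
        Real.rpow_le_rpow_of_exponent_le h1 (by linarith)
    _ = (1 + t ^ 2)⁻¹ := by rw [Real.rpow_neg_one]

lemma three_mul_le {X c K : ℝ} (hX : X ≤ c) (hX0 : 0 ≤ X) (hK : 0 ≤ K) :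
    X * K * K ≤ c * K ^ 2 ∧ K * X * K ≤ c * K ^ 2 ∧ K * K * X ≤ c * K ^ 2 := by
  have h := mul_le_mul_of_nonneg_right hX (mul_nonneg hK hK)
  refine ⟨by nlinarith, by nlinarith, by nlinarith⟩

set_option maxHeartbeats 1000000 in
theorem stmt7 (m : ℝ) (hm : m < -5 / 2) (a₁ a₂ a₃ : ℝ → ℂ)
    (h₁ : SymbolClass m a₁) (h₂ : SymbolClass m a₂) (h₃ : SymbolClass m a₃)
    (b : (Fin 3 → ℝ) → ℂ) (hb : Measurable b) (hbnorm : bNormSq m b < ⊤)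
    (α β δ : ℝ) (hα : 0 < α) (hαβ : α < β) (hδ : 0 < δ) (hδ1 : δ < min 1 α) :
    ∃ C : ℝ, 0 < C ∧
      ∀ ξ : ℝ, 1 < |ξ| → ∀ κ₂ ∈ Set.Icc α β, ∀ κ₃ ∈ Set.Icc α β,
        ‖a₁ ξ * a₂ (κ₂ * ξ) * a₃ (κ₃ * ξ)‖ * ‖∫ η in (A_GGG δ ξ κ₂ κ₃)ᶜ, b η‖
          ≤ C * |ξ| ^ (3 * m - 1) := by
  classical
  have hm0 : m ≤ 0 := by linarith
  set p : ℝ := 2 * m + 1 with hp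
  have hple : p ≤ -2 := by rw [hp]; linarith
  set g : ℝ → ℝ := fun t => jb t ^ p with hgdef
  have hgint : Integrable g := integrable_jb_rpow hple
  have hg0 : ∀ t, 0 ≤ g t := fun t => Real.rpow_nonneg (jb_pos t).le p
  set K : ℝ := ∫ t, g t with hKdef
  have hK0 : 0 ≤ K := integral_nonneg hg0
  set Q : (Fin 3 → ℝ) → ℝ := fun η =>
    jb (η 0) ^ (-2 * m - 1) * jb (η 1) ^ (-2 * m - 1) * jb (η 2) ^ (-2 * m - 1) * ‖b η‖ ^ 2
    with hQdef
  have hQ0 : ∀ η, 0 ≤ Q η := by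
    intro η
    have h0 := Real.rpow_nonneg (jb_pos (η 0)).le (-2 * m - 1)
    have h1 := Real.rpow_nonneg (jb_pos (η 1)).le (-2 * m - 1)
    have h2 := Real.rpow_nonneg (jb_pos (η 2)).le (-2 * m - 1)
    have h3 : (0:ℝ) ≤ ‖b η‖ ^ 2 := sq_nonneg _
    exact mul_nonneg (mul_nonneg (mul_nonneg h0 h1) h2) h3
  have hQmeas : Measurable Q := by
    have hj : ∀ i : Fin 3, Measurable fun η : Fin 3 → ℝ => jb (η i) ^ (-2 * m - 1) :=
      fun i => (continuous_jb_rpow _).measurable.comp (measurable_pi_apply i)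
    exact (((hj 0).mul (hj 1)).mul (hj 2)).mul (hb.norm.pow_const 2)
  have hQint : Integrable Q := by
    refine ⟨hQmeas.aestronglyMeasurable,
      (hasFiniteIntegral_iff_ofReal (Filter.Eventually.of_forall hQ0)).2 ?_⟩
    have heq : (∫⁻ η, ENNReal.ofReal (Q η)) = bNormSq m b := rfl
    rw [heq]; exact hbnorm
  set W : (Fin 3 → ℝ) → ℝ := fun η => ∏ i, g (η i) with hWdef
  have hWeq : ∀ η, W η = g (η 0) * g (η 1) * g (η 2) := fun η => by
    rw [hWdef]; exact Fin.prod_univ_three _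
  have hW0 : ∀ η, 0 ≤ W η := fun η => Finset.prod_nonneg fun i _ => hg0 _
  have hWint : Integrable W := Integrable.fintype_prod (𝕜 := ℝ) (fun _ => hgint)
  clear_value p g K Q W
  have hpair : ∀ t : ℝ, jb t ^ p * jb t ^ (-2 * m - 1) = 1 := by
    intro t
    rw [← Real.rpow_add (jb_pos t), hp, show 2 * m + 1 + (-2 * m - 1) = 0 by ring,
      Real.rpow_zero]
  have hWQ : ∀ η, W η * Q η = ‖b η‖ ^ 2 := by
    intro η
    rw [hWeq η, hQdef, hgdef]
    have h0 := hpair (η 0); have h1 := hpair (η 1); have h2 := hpair (η 2)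
    calc jb (η 0) ^ p * jb (η 1) ^ p * jb (η 2) ^ p *
          (jb (η 0) ^ (-2*m-1) * jb (η 1) ^ (-2*m-1) * jb (η 2) ^ (-2*m-1) * ‖b η‖ ^ 2)
        = (jb (η 0) ^ p * jb (η 0) ^ (-2*m-1)) * (jb (η 1) ^ p * jb (η 1) ^ (-2*m-1)) *
          (jb (η 2) ^ p * jb (η 2) ^ (-2*m-1)) * ‖b η‖ ^ 2 := by ring
      _ = ‖b η‖ ^ 2 := by rw [h0, h1, h2]; ring
  have key : ∀ l : ℝ, 0 < l → ∀ η, ‖b η‖ ≤ (l * W η + l⁻¹ * Q η) / 2 := by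
    intro l hl η
    have hlW : 0 ≤ l * W η := mul_nonneg hl.le (hW0 η)
    have hlQ : 0 ≤ l⁻¹ * Q η := mul_nonneg (inv_nonneg.2 hl.le) (hQ0 η)
    have hmulsq : l * W η * (l⁻¹ * Q η) = ‖b η‖ ^ 2 := by
      rw [← hWQ η]; field_simp
    have e : Real.sqrt (l * W η) * Real.sqrt (l⁻¹ * Q η) = ‖b η‖ := by
      rw [← Real.sqrt_mul hlW, hmulsq, Real.sqrt_sq (norm_nonneg _)]
    have s1 : Real.sqrt (l * W η) ^ 2 = l * W η := Real.sq_sqrt hlW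
    have s2 : Real.sqrt (l⁻¹ * Q η) ^ 2 = l⁻¹ * Q η := Real.sq_sqrt hlQ
    nlinarith [sq_nonneg (Real.sqrt (l * W η) - Real.sqrt (l⁻¹ * Q η))]
  have hbint : Integrable b := by
    refine (((hWint.const_mul 1).add (hQint.const_mul 1⁻¹)).div_const 2).mono'
      hb.aestronglyMeasurable (Filter.Eventually.of_forall fun η => ?_)
    exact key 1 one_pos η
  set B₂ : ℝ := ∫ η, Q η with hB2def
  have hB20 : 0 ≤ B₂ := integral_nonneg hQ0
  clear_value B₂
  set ε : ℝ := min 1 α - δ with hεdef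
  have hε0 : 0 < ε := sub_pos.2 hδ1
  clear_value ε
  obtain ⟨C₁, hC₁pos, hC₁⟩ := h₁.2 0
  obtain ⟨C₂, hC₂pos, hC₂⟩ := h₂.2 0
  obtain ⟨C₃, hC₃pos, hC₃⟩ := h₃.2 0
  simp only [iteratedDeriv_zero, Nat.cast_zero, sub_zero] at hC₁ hC₂ hC₃
  have hαm : 0 < α ^ m := Real.rpow_pos_of_pos hα m
  set A : ℝ := C₁ * C₂ * C₃ * (α ^ m * α ^ m) with hAdef
  have hApos : 0 < A :=
    mul_pos (mul_pos (mul_pos hC₁pos hC₂pos) hC₃pos) (mul_pos hαm hαm)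
  clear_value A
  have hεp : 0 ≤ ε ^ p := Real.rpow_nonneg hε0.le p
  refine ⟨3 * A * δ * ε ^ p * K ^ 2 + A * B₂ / 2 + 1, ?_, ?_⟩
  · have h1 : 0 ≤ 3 * A * δ * ε ^ p * K ^ 2 := by
      have := mul_nonneg (mul_nonneg (mul_nonneg
        (by linarith : (0:ℝ) ≤ 3 * A) hδ.le) hεp) (sq_nonneg K)
      linarith
    have h2 : 0 ≤ A * B₂ := mul_nonneg hApos.le hB20
    linarith
  intro ξ hξ κ₂ hκ₂ κ₃ hκ₃
  have hξ0 : 0 < |ξ| := lt_trans one_pos hξ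
  have hr0 : 0 < δ * |ξ| := mul_pos hδ hξ0
  have hεξ : 0 < ε * |ξ| := mul_pos hε0 hξ0
  -- slab/cylinder estimate
  have hcyl : ∀ (i : Fin 3) (c : ℝ), (ε + δ) * |ξ| ≤ |c| →
      ∫ η in (fun η : Fin 3 → ℝ => η i) ⁻¹' Metric.ball c (δ * |ξ|), W η
        ≤ ε ^ p * |ξ| ^ p * (2 * (δ * |ξ|)) * K ^ 2 := by
    intro i c hc
    have hTmeas : MeasurableSet (Metric.ball c (δ * |ξ|)) := measurableSet_ball
    have hTvol : volume (Metric.ball c (δ * |ξ|)) = ENNReal.ofReal (2 * (δ * |ξ|)) :=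
      Real.volume_ball c (δ * |ξ|)
    have hgT : ∀ t ∈ Metric.ball c (δ * |ξ|), g t ≤ (ε * |ξ|) ^ p := by
      intro t ht
      simp only [hgdef]
      refine jb_rpow_le_of_abs_ge (show p ≤ 0 by linarith) hεξ ?_
      have h1 : |t - c| < δ * |ξ| := by
        simpa [Real.dist_eq] using ht
      have h2 : |c| - |t| ≤ |c - t| := abs_sub_abs_le_abs_sub c t
      rw [abs_sub_comm c t] at h2
      nlinarith
    have hint1 : ∫ t in Metric.ball c (δ * |ξ|), g t ≤ ε ^ p * |ξ| ^ p * (2 * (δ * |ξ|)) := by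
      calc ∫ t in Metric.ball c (δ * |ξ|), g t
          ≤ ∫ _ in Metric.ball c (δ * |ξ|), (ε * |ξ|) ^ p :=
            setIntegral_mono_on hgint.integrableOn
              (integrableOn_const (by rw [hTvol]; exact ENNReal.ofReal_ne_top))
              hTmeas hgT
        _ = (2 * (δ * |ξ|)) * (ε * |ξ|) ^ p := by
            rw [setIntegral_const, measureReal_def, hTvol, ENNReal.toReal_ofReal (by positivity), smul_eq_mul]
        _ = ε ^ p * |ξ| ^ p * (2 * (δ * |ξ|)) := by
            rw [Real.mul_rpow hε0.le (abs_nonneg ξ)]; ring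
    set T := Metric.ball c (δ * |ξ|) with hTdef
    set f : Fin 3 → ℝ → ℝ := fun j => if j = i then T.indicator g else g with hfdef
    have hprod : ∀ η : Fin 3 → ℝ,
        ((fun η : Fin 3 → ℝ => η i) ⁻¹' T).indicator W η = ∏ j, f j (η j) := by
      intro η
      by_cases h : η i ∈ T
      · rw [Set.indicator_of_mem (show η ∈ (fun η : Fin 3 → ℝ => η i) ⁻¹' T from h), hWdef]
        refine (Finset.prod_congr rfl fun j _ => ?_).symm
        by_cases hj : j = i
        · subst hj; simp [hfdef, Set.indicator_of_mem h]
        · simp [hfdef, hj]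
      · rw [Set.indicator_of_notMem (show η ∉ (fun η : Fin 3 → ℝ => η i) ⁻¹' T from h)]
        exact (Finset.prod_eq_zero (Finset.mem_univ i)
          (by simp [hfdef, Set.indicator_of_notMem h])).symm
    have hpre : MeasurableSet ((fun η : Fin 3 → ℝ => η i) ⁻¹' T) :=
      (measurable_pi_apply i) measurableSet_ball
    have hI : ∫ η in (fun η : Fin 3 → ℝ => η i) ⁻¹' T, W η = ∏ j, ∫ t, f j t := by
      rw [← integral_indicator hpre,
        show (fun η => ((fun η : Fin 3 → ℝ => η i) ⁻¹' T).indicator W η)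
          = fun η => ∏ j, f j (η j) from funext hprod]
      exact MeasureTheory.integral_fintype_prod_eq_prod f
    have hTind : ∫ t, T.indicator g t = ∫ t in T, g t := integral_indicator hTmeas
    have hK2 : (0:ℝ) ≤ K * K := mul_nonneg hK0 hK0
    have hTg0 : 0 ≤ ∫ t in T, g t := setIntegral_nonneg hTmeas fun t _ => hg0 t
    have hfact : ∀ j, (∫ t, f j t) = if j = i then (∫ t in T, g t) else K := by
      intro j
      by_cases hj : j = i
      · simp [hfdef, hj, hTind]
      · simp [hfdef, hj, ← hKdef]
    rw [hI]
    simp_rw [hfact]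
    rw [Fin.prod_univ_three]
    obtain ⟨e1, e2, e3⟩ := three_mul_le hint1 hTg0 hK0
    clear hprod hI hfact hpre hgT
    fin_cases i
    · norm_num; exact e1
    · norm_num; exact e2
    · norm_num; exact e3
  -- centers are far from the origin
  have hmin : ε + δ = min 1 α := by rw [hεdef]; ring
  have hκ₂0 : 0 < κ₂ := hα.trans_le hκ₂.1
  have hκ₃0 : 0 < κ₃ := hα.trans_le hκ₃.1
  have hc1 : (ε + δ) * |ξ| ≤ |ξ| := by
    have h1 : ε + δ ≤ 1 := by rw [hmin]; exact min_le_left _ _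
    nlinarith
  have hc2 : (ε + δ) * |ξ| ≤ |κ₂ * ξ| := by
    rw [abs_mul, abs_of_pos hκ₂0]
    have h1 : ε + δ ≤ κ₂ := by rw [hmin]; exact le_trans (min_le_right _ _) hκ₂.1
    nlinarith
  have hc3 : (ε + δ) * |ξ| ≤ |κ₃ * ξ| := by
    rw [abs_mul, abs_of_pos hκ₃0]
    have h1 : ε + δ ≤ κ₃ := by rw [hmin]; exact le_trans (min_le_right _ _) hκ₃.1
    nlinarith
  have hAm : MeasurableSet (A_GGG δ ξ κ₂ κ₃) := by
    have m1 : Measurable fun η : Fin 3 → ℝ => |η 0 - ξ| :=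
      ((measurable_pi_apply 0).sub measurable_const).abs
    have m2 : Measurable fun η : Fin 3 → ℝ => |η 1 - κ₂ * ξ| :=
      ((measurable_pi_apply 1).sub measurable_const).abs
    have m3 : Measurable fun η : Fin 3 → ℝ => |η 2 - κ₃ * ξ| :=
      ((measurable_pi_apply 2).sub measurable_const).abs
    simp only [A_GGG, Set.setOf_and]
    exact (measurableSet_le measurable_const m1).inter
      ((measurableSet_le measurable_const m2).inter (measurableSet_le measurable_const m3))
  have hAc : MeasurableSet (A_GGG δ ξ κ₂ κ₃)ᶜ := hAm.compl
  have hS₁m : MeasurableSet ((fun η : Fin 3 → ℝ => η 0) ⁻¹' Metric.ball ξ (δ * |ξ|)) :=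
    (measurable_pi_apply 0) measurableSet_ball
  have hS₂m : MeasurableSet ((fun η : Fin 3 → ℝ => η 1) ⁻¹' Metric.ball (κ₂ * ξ) (δ * |ξ|)) :=
    (measurable_pi_apply 1) measurableSet_ball
  have hS₃m : MeasurableSet ((fun η : Fin 3 → ℝ => η 2) ⁻¹' Metric.ball (κ₃ * ξ) (δ * |ξ|)) :=
    (measurable_pi_apply 2) measurableSet_ball
  have hsub : (A_GGG δ ξ κ₂ κ₃)ᶜ ⊆
      ((fun η : Fin 3 → ℝ => η 0) ⁻¹' Metric.ball ξ (δ * |ξ|)) ∪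
      ((fun η : Fin 3 → ℝ => η 1) ⁻¹' Metric.ball (κ₂ * ξ) (δ * |ξ|)) ∪
      ((fun η : Fin 3 → ℝ => η 2) ⁻¹' Metric.ball (κ₃ * ξ) (δ * |ξ|)) := by
    intro η hη
    simp only [A_GGG, Set.mem_compl_iff, Set.mem_setOf_eq, not_and_or, not_le] at hη
    simp only [Set.mem_union, Set.mem_preimage, Metric.mem_ball, Real.dist_eq]
    tauto
  have hWc : ∫ η in (A_GGG δ ξ κ₂ κ₃)ᶜ, W η
      ≤ 3 * (ε ^ p * |ξ| ^ p * (2 * (δ * |ξ|)) * K ^ 2) := by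
    have hptwise : ∀ η, (A_GGG δ ξ κ₂ κ₃)ᶜ.indicator W η ≤
        ((fun η : Fin 3 → ℝ => η 0) ⁻¹' Metric.ball ξ (δ * |ξ|)).indicator W η +
        ((fun η : Fin 3 → ℝ => η 1) ⁻¹' Metric.ball (κ₂ * ξ) (δ * |ξ|)).indicator W η +
        ((fun η : Fin 3 → ℝ => η 2) ⁻¹' Metric.ball (κ₃ * ξ) (δ * |ξ|)).indicator W η := by
      intro η
      have n1 : 0 ≤ ((fun η : Fin 3 → ℝ => η 0) ⁻¹' Metric.ball ξ (δ * |ξ|)).indicator W η :=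
        Set.indicator_nonneg (fun x _ => hW0 x) η
      have n2 : 0 ≤ ((fun η : Fin 3 → ℝ => η 1) ⁻¹'
          Metric.ball (κ₂ * ξ) (δ * |ξ|)).indicator W η :=
        Set.indicator_nonneg (fun x _ => hW0 x) η
      have n3 : 0 ≤ ((fun η : Fin 3 → ℝ => η 2) ⁻¹'
          Metric.ball (κ₃ * ξ) (δ * |ξ|)).indicator W η :=
        Set.indicator_nonneg (fun x _ => hW0 x) η
      by_cases h : η ∈ (A_GGG δ ξ κ₂ κ₃)ᶜ
      · rw [Set.indicator_of_mem h]
        rcases hsub h with (h' | h') | h'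
        · rw [Set.indicator_of_mem h'] at n1 ⊢; linarith
        · rw [Set.indicator_of_mem h'] at n2 ⊢; linarith
        · rw [Set.indicator_of_mem h'] at n3 ⊢; linarith
      · rw [Set.indicator_of_notMem h]; linarith
    have b1 := hcyl 0 ξ hc1
    have b2 := hcyl 1 (κ₂ * ξ) hc2
    have b3 := hcyl 2 (κ₃ * ξ) hc3
    calc ∫ η in (A_GGG δ ξ κ₂ κ₃)ᶜ, W η
        = ∫ η, (A_GGG δ ξ κ₂ κ₃)ᶜ.indicator W η := (integral_indicator hAc).symm
      _ ≤ ∫ η, (((fun η : Fin 3 → ℝ => η 0) ⁻¹' Metric.ball ξ (δ * |ξ|)).indicator W η +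
            ((fun η : Fin 3 → ℝ => η 1) ⁻¹' Metric.ball (κ₂ * ξ) (δ * |ξ|)).indicator W η +
            ((fun η : Fin 3 → ℝ => η 2) ⁻¹' Metric.ball (κ₃ * ξ) (δ * |ξ|)).indicator W η) :=
          integral_mono (hWint.indicator hAc)
            (((hWint.indicator hS₁m).add (hWint.indicator hS₂m)).add (hWint.indicator hS₃m))
            hptwise
      _ = (∫ η in (fun η : Fin 3 → ℝ => η 0) ⁻¹' Metric.ball ξ (δ * |ξ|), W η) +
          (∫ η in (fun η : Fin 3 → ℝ => η 1) ⁻¹' Metric.ball (κ₂ * ξ) (δ * |ξ|), W η) +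
          (∫ η in (fun η : Fin 3 → ℝ => η 2) ⁻¹' Metric.ball (κ₃ * ξ) (δ * |ξ|), W η) := by
          have i1 : Integrable (fun η : Fin 3 → ℝ =>
              ((fun η : Fin 3 → ℝ => η 0) ⁻¹' Metric.ball ξ (δ * |ξ|)).indicator W η) :=
            hWint.indicator hS₁m
          have i2 : Integrable (fun η : Fin 3 → ℝ =>
              ((fun η : Fin 3 → ℝ => η 1) ⁻¹' Metric.ball (κ₂ * ξ) (δ * |ξ|)).indicator W η) :=
            hWint.indicator hS₂m
          have i3 : Integrable (fun η : Fin 3 → ℝ =>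
              ((fun η : Fin 3 → ℝ => η 2) ⁻¹' Metric.ball (κ₃ * ξ) (δ * |ξ|)).indicator W η) :=
            hWint.indicator hS₃m
          have i12 : Integrable (fun η : Fin 3 → ℝ =>
              ((fun η : Fin 3 → ℝ => η 0) ⁻¹' Metric.ball ξ (δ * |ξ|)).indicator W η +
              ((fun η : Fin 3 → ℝ => η 1) ⁻¹' Metric.ball (κ₂ * ξ) (δ * |ξ|)).indicator W η) :=
            i1.add i2
          rw [integral_add i12 i3, integral_add i1 i2,
            integral_indicator hS₁m, integral_indicator hS₂m, integral_indicator hS₃m]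
      _ ≤ 3 * (ε ^ p * |ξ| ^ p * (2 * (δ * |ξ|)) * K ^ 2) := by linarith
  have hNb : ‖∫ η in (A_GGG δ ξ κ₂ κ₃)ᶜ, b η‖
      ≤ 3 * δ * ε ^ p * K ^ 2 * |ξ| ^ (p + 2) + B₂ / 2 * |ξ|⁻¹ := by
    have h1 : ‖∫ η in (A_GGG δ ξ κ₂ κ₃)ᶜ, b η‖ ≤ ∫ η in (A_GGG δ ξ κ₂ κ₃)ᶜ, ‖b η‖ :=
      norm_integral_le_integral_norm _
    have h2 : ∫ η in (A_GGG δ ξ κ₂ κ₃)ᶜ, ‖b η‖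
        ≤ ∫ η in (A_GGG δ ξ κ₂ κ₃)ᶜ, (|ξ| * W η + |ξ|⁻¹ * Q η) / 2 :=
      integral_mono hbint.norm.integrableOn
        ((((hWint.const_mul |ξ|).add (hQint.const_mul |ξ|⁻¹)).div_const 2).integrableOn)
        (fun η => key |ξ| hξ0 η)
    have h3 : ∫ η in (A_GGG δ ξ κ₂ κ₃)ᶜ, (|ξ| * W η + |ξ|⁻¹ * Q η) / 2
        = (|ξ| * (∫ η in (A_GGG δ ξ κ₂ κ₃)ᶜ, W η)
           + |ξ|⁻¹ * (∫ η in (A_GGG δ ξ κ₂ κ₃)ᶜ, Q η)) / 2 := by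
      rw [integral_div, integral_add ((hWint.const_mul |ξ|).integrableOn)
        ((hQint.const_mul |ξ|⁻¹).integrableOn), integral_const_mul, integral_const_mul]
    have h4 : ∫ η in (A_GGG δ ξ κ₂ κ₃)ᶜ, Q η ≤ B₂ := by
      rw [hB2def]
      exact setIntegral_le_integral hQint (Filter.Eventually.of_forall hQ0)
    have h5 : |ξ| * (∫ η in (A_GGG δ ξ κ₂ κ₃)ᶜ, W η)
        ≤ |ξ| * (3 * (ε ^ p * |ξ| ^ p * (2 * (δ * |ξ|)) * K ^ 2)) :=
      mul_le_mul_of_nonneg_left hWc (abs_nonneg ξ)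
    have h6 : |ξ|⁻¹ * (∫ η in (A_GGG δ ξ κ₂ κ₃)ᶜ, Q η) ≤ |ξ|⁻¹ * B₂ :=
      mul_le_mul_of_nonneg_left h4 (inv_nonneg.2 (abs_nonneg ξ))
    have hxx : |ξ| * |ξ| ^ p * |ξ| = |ξ| ^ (p + 2) := by
      have h1 : |ξ| ^ (p + 2) = |ξ| ^ p * |ξ| ^ (2:ℝ) := Real.rpow_add hξ0 p 2
      have h2 : |ξ| ^ (2:ℝ) = |ξ| * |ξ| := by
        rw [show (2:ℝ) = ((2:ℕ):ℝ) by norm_num, Real.rpow_natCast]; ring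
      rw [h1, h2]; ring
    have hE : |ξ| * (3 * (ε ^ p * |ξ| ^ p * (2 * (δ * |ξ|)) * K ^ 2))
        = 6 * δ * ε ^ p * K ^ 2 * |ξ| ^ (p + 2) := by rw [← hxx]; ring
    linarith
  -- symbol bounds
  have hjm1 : jb ξ ^ m ≤ |ξ| ^ m := Real.rpow_le_rpow_of_nonpos hξ0 (abs_le_jb ξ) hm0
  have e1 : ‖a₁ ξ‖ ≤ C₁ * |ξ| ^ m :=
    (hC₁ ξ).trans (mul_le_mul_of_nonneg_left hjm1 hC₁pos.le)
  have habs2 : α * |ξ| ≤ jb (κ₂ * ξ) := by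
    refine le_trans ?_ (abs_le_jb _)
    rw [abs_mul, abs_of_pos hκ₂0]
    exact mul_le_mul_of_nonneg_right hκ₂.1 (abs_nonneg ξ)
  have habs3 : α * |ξ| ≤ jb (κ₃ * ξ) := by
    refine le_trans ?_ (abs_le_jb _)
    rw [abs_mul, abs_of_pos hκ₃0]
    exact mul_le_mul_of_nonneg_right hκ₃.1 (abs_nonneg ξ)
  have e2 : ‖a₂ (κ₂ * ξ)‖ ≤ C₂ * (α ^ m * |ξ| ^ m) := by
    refine (hC₂ _).trans ?_
    have h := Real.rpow_le_rpow_of_nonpos (mul_pos hα hξ0) habs2 hm0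
    rw [Real.mul_rpow hα.le (abs_nonneg ξ)] at h
    exact mul_le_mul_of_nonneg_left h hC₂pos.le
  have e3 : ‖a₃ (κ₃ * ξ)‖ ≤ C₃ * (α ^ m * |ξ| ^ m) := by
    refine (hC₃ _).trans ?_
    have h := Real.rpow_le_rpow_of_nonpos (mul_pos hα hξ0) habs3 hm0
    rw [Real.mul_rpow hα.le (abs_nonneg ξ)] at h
    exact mul_le_mul_of_nonneg_left h hC₃pos.le
  have hP : ‖a₁ ξ * a₂ (κ₂ * ξ) * a₃ (κ₃ * ξ)‖ ≤ A * |ξ| ^ (3 * m) := by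
    rw [norm_mul, norm_mul]
    have hxim : 0 ≤ |ξ| ^ m := Real.rpow_nonneg (abs_nonneg ξ) m
    have hn1 : 0 ≤ C₁ * |ξ| ^ m := mul_nonneg hC₁pos.le hxim
    have hn2 : 0 ≤ C₂ * (α ^ m * |ξ| ^ m) := mul_nonneg hC₂pos.le (mul_nonneg hαm.le hxim)
    have step : ‖a₁ ξ‖ * ‖a₂ (κ₂ * ξ)‖ * ‖a₃ (κ₃ * ξ)‖
        ≤ (C₁ * |ξ| ^ m) * (C₂ * (α ^ m * |ξ| ^ m)) * (C₃ * (α ^ m * |ξ| ^ m)) :=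
      mul_le_mul (mul_le_mul e1 e2 (norm_nonneg _) hn1) e3 (norm_nonneg _)
        (mul_nonneg hn1 hn2)
    have hxm : |ξ| ^ m * |ξ| ^ m * |ξ| ^ m = |ξ| ^ (3 * m) := by
      rw [← Real.rpow_add hξ0, ← Real.rpow_add hξ0, show m + m + m = 3 * m by ring]
    calc ‖a₁ ξ‖ * ‖a₂ (κ₂ * ξ)‖ * ‖a₃ (κ₃ * ξ)‖
        ≤ (C₁ * |ξ| ^ m) * (C₂ * (α ^ m * |ξ| ^ m)) * (C₃ * (α ^ m * |ξ| ^ m)) := step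
      _ = A * (|ξ| ^ m * |ξ| ^ m * |ξ| ^ m) := by rw [hAdef]; ring
      _ = A * |ξ| ^ (3 * m) := by rw [hxm]
  -- final assembly
  have hA3 : 0 ≤ A * |ξ| ^ (3 * m) := mul_nonneg hApos.le (Real.rpow_nonneg (abs_nonneg ξ) _)
  have c1nn : 0 ≤ 3 * A * δ * ε ^ p * K ^ 2 := by
    have h := mul_nonneg (mul_nonneg (mul_nonneg
      (by linarith : (0:ℝ) ≤ 3 * A) hδ.le) hεp) (sq_nonneg K)
    linarith
  calc ‖a₁ ξ * a₂ (κ₂ * ξ) * a₃ (κ₃ * ξ)‖ * ‖∫ η in (A_GGG δ ξ κ₂ κ₃)ᶜ, b η‖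
      ≤ (A * |ξ| ^ (3 * m)) * (3 * δ * ε ^ p * K ^ 2 * |ξ| ^ (p + 2) + B₂ / 2 * |ξ|⁻¹) :=
        mul_le_mul hP hNb (norm_nonneg _) hA3
    _ = 3 * A * δ * ε ^ p * K ^ 2 * (|ξ| ^ (3 * m) * |ξ| ^ (p + 2))
        + (A * B₂ / 2) * (|ξ| ^ (3 * m) * |ξ|⁻¹) := by ring
    _ ≤ 3 * A * δ * ε ^ p * K ^ 2 * |ξ| ^ (3 * m - 1)
        + (A * B₂ / 2) * |ξ| ^ (3 * m - 1) := by
        have k1 : |ξ| ^ (3 * m) * |ξ| ^ (p + 2) = |ξ| ^ (3 * m + (p + 2)) :=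
          (Real.rpow_add hξ0 _ _).symm
        have k2 : |ξ| ^ (3 * m + (p + 2)) ≤ |ξ| ^ (3 * m - 1) :=
          Real.rpow_le_rpow_of_exponent_le hξ.le (by rw [hp]; linarith)
        have k3 : |ξ| ^ (3 * m) * |ξ|⁻¹ = |ξ| ^ (3 * m - 1) := by
          rw [← Real.rpow_neg_one |ξ|, ← Real.rpow_add hξ0,
            show 3 * m + (-1) = 3 * m - 1 by ring]
        rw [k3, k1]
        have := mul_le_mul_of_nonneg_left k2 c1nn
        linarith
    _ ≤ (3 * A * δ * ε ^ p * K ^ 2 + A * B₂ / 2 + 1) * |ξ| ^ (3 * m - 1) := by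
        have hz : 0 ≤ |ξ| ^ (3 * m - 1) := Real.rpow_nonneg (abs_nonneg ξ) _
        nlinarith [hz]
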